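/- Let Q(N) = E[|α √(μ_IU μ_SI) Σ_{i=1}^N e^{jθ_i} + √μ_SU e^{jφ_SU}|²] where θ₁,…,θ_N are i.i.d. uniform on [-π/2, π/2]. Then Q(N) = β N² + λ N + μ_SU, where β = 4α² μ_IU μ_SI/π² and λ = (1 - 4/π²) α² μ_IU μ_SI + (4α/π) √(μ_IU μ_SI μ_SU) cos φ_SU. -/

import Mathlib

open MeasureTheory ProbabilityTheory Real Set
open scoped ENNReal

section Aux

variable {Ω : Type*} [MeasurableSpace Ω] {Pm : Measure Ω} {X : Ω → ℝ}

lemma unif_int (hmX : Measurable X) (hu : pdf.IsUniform X (Icc (-(π/2)) (π/2)) Pm)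
    (f : ℝ → ℝ) (hf : Continuous f) :
    ∫ ω, f (X ω) ∂Pm = π⁻¹ * ∫ x in (-(π/2))..(π/2), f x := by
  have hvol : (volume (Icc (-(π/2)) (π/2)) : ℝ≥0∞) = ENNReal.ofReal π := by
    rw [Real.volume_Icc]; ring_nf
  have h1 : ∫ ω, f (X ω) ∂Pm = ∫ x, f x ∂(Measure.map X Pm) := by
    rw [integral_map hmX.aemeasurable hf.aestronglyMeasurable]
  rw [h1, hu, ProbabilityTheory.cond, integral_smul_measure, hvol,
    ENNReal.toReal_inv, ENNReal.toReal_ofReal Real.pi_pos.le, smul_eq_mul,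
    intervalIntegral.integral_of_le (by linarith [Real.pi_pos] : -(π/2) ≤ π/2),
    ← integral_Icc_eq_integral_Ioc]

lemma m_cos (hmX : Measurable X) (hu : pdf.IsUniform X (Icc (-(π/2)) (π/2)) Pm) :
    ∫ ω, Real.cos (X ω) ∂Pm = 2 / π := by
  have h : ∫ ω, Real.cos (X ω) ∂Pm = π⁻¹ * ∫ x in (-(π/2))..(π/2), Real.cos x :=
    unif_int hmX hu Real.cos Real.continuous_cos
  rw [h, integral_cos]
  simp
  ring

lemma m_sin (hmX : Measurable X) (hu : pdf.IsUniform X (Icc (-(π/2)) (π/2)) Pm) :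
    ∫ ω, Real.sin (X ω) ∂Pm = 0 := by
  have h : ∫ ω, Real.sin (X ω) ∂Pm = π⁻¹ * ∫ x in (-(π/2))..(π/2), Real.sin x :=
    unif_int hmX hu Real.sin Real.continuous_sin
  rw [h, integral_sin]
  simp

lemma m_cos_sq (hmX : Measurable X) (hu : pdf.IsUniform X (Icc (-(π/2)) (π/2)) Pm) :
    ∫ ω, Real.cos (X ω) ^ 2 ∂Pm = 1 / 2 := by
  have h : ∫ ω, Real.cos (X ω) ^ 2 ∂Pm = π⁻¹ * ∫ x in (-(π/2))..(π/2), Real.cos x ^ 2 :=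
    unif_int hmX hu (fun x => Real.cos x ^ 2) (by continuity)
  rw [h, integral_cos_sq]
  simp
  field_simp

lemma m_sin_sq (hmX : Measurable X) (hu : pdf.IsUniform X (Icc (-(π/2)) (π/2)) Pm) :
    ∫ ω, Real.sin (X ω) ^ 2 ∂Pm = 1 / 2 := by
  have h : ∫ ω, Real.sin (X ω) ^ 2 ∂Pm = π⁻¹ * ∫ x in (-(π/2))..(π/2), Real.sin x ^ 2 :=
    unif_int hmX hu (fun x => Real.sin x ^ 2) (by continuity)
  rw [h, integral_sin_sq]
  simp
  field_simp

end Aux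

/-- Q(N) = E[|α√(μ_IU μ_SI) Σ e^{jθᵢ} + √μ_SU e^{jφ_SU}|²] = βN² + λN + μ_SU
with β = 4α²μ_IU μ_SI/π², λ = (1-4/π²)α²μ_IU μ_SI + (4α/π)√(μ_IU μ_SI μ_SU)cos φ_SU. -/
theorem stmt5 {Ω : Type*} [MeasurableSpace Ω] (Pm : Measure Ω) [IsProbabilityMeasure Pm]
    (N : ℕ) (θ : Fin N → Ω → ℝ) (hm : ∀ i, Measurable (θ i))
    (hindep : iIndepFun θ Pm)
    (hunif : ∀ i, pdf.IsUniform (θ i) (Icc (-(π/2)) (π/2)) Pm)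
    (α μIU μSI μSU φSU : ℝ) (hα0 : 0 < α) (hα1 : α ≤ 1)
    (hIU : 0 < μIU) (hSI : 0 < μSI) (hSU : 0 < μSU) :
    ∫ ω, (‖
        ((α : ℂ) * (Real.sqrt (μIU * μSI) : ℂ) * ∑ i, Complex.exp (Complex.I * (θ i ω : ℂ)) +
          (Real.sqrt μSU : ℂ) * Complex.exp (Complex.I * (φSU : ℂ)))‖) ^ 2 ∂Pm
      = (4 * α ^ 2 * μIU * μSI / π ^ 2) * N ^ 2 +
          ((1 - 4 / π ^ 2) * α ^ 2 * μIU * μSI +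
            (4 * α / π) * Real.sqrt (μIU * μSI * μSU) * Real.cos φSU) * N + μSU := by
  have hπ : (π : ℝ) ≠ 0 := Real.pi_ne_zero
  set c : ℝ := α * Real.sqrt (μIU * μSI) with hc
  set d : ℝ := Real.sqrt μSU with hd
  set C : Fin N → Ω → ℝ := fun i ω => Real.cos (θ i ω) with hC
  set S : Fin N → Ω → ℝ := fun i ω => Real.sin (θ i ω) with hS
  set Xf : Ω → ℝ := fun ω => ∑ i, C i ω with hXf
  set Yf : Ω → ℝ := fun ω => ∑ i, S i ω with hYf
  -- integrability helper
  have hbint : ∀ (g : Ω → ℝ), Measurable g → (∀ ω, |g ω| ≤ (1 : ℝ)) → Integrable g Pm := by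
    intro g hg hb
    refine (integrable_const (1 : ℝ)).mono' hg.aestronglyMeasurable (ae_of_all _ fun ω => ?_)
    simpa [Real.norm_eq_abs] using hb ω
  have hmC : ∀ i, Measurable (C i) := fun i => Real.measurable_cos.comp (hm i)
  have hmS : ∀ i, Measurable (S i) := fun i => Real.measurable_sin.comp (hm i)
  have hiC : ∀ i, Integrable (C i) Pm := fun i =>
    hbint _ (hmC i) (fun ω => Real.abs_cos_le_one _)
  have hiS : ∀ i, Integrable (S i) Pm := fun i =>
    hbint _ (hmS i) (fun ω => Real.abs_sin_le_one _)
  have hiCC : ∀ i j, Integrable (fun ω => C i ω * C j ω) Pm := fun i j =>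
    hbint _ ((hmC i).mul (hmC j)) (fun ω => by
      rw [abs_mul]
      exact mul_le_one₀ (Real.abs_cos_le_one _) (abs_nonneg _) (Real.abs_cos_le_one _))
  have hiSS : ∀ i j, Integrable (fun ω => S i ω * S j ω) Pm := fun i j =>
    hbint _ ((hmS i).mul (hmS j)) (fun ω => by
      rw [abs_mul]
      exact mul_le_one₀ (Real.abs_sin_le_one _) (abs_nonneg _) (Real.abs_sin_le_one _))
  -- first moments
  have hEC : ∀ i, ∫ ω, C i ω ∂Pm = 2 / π := fun i => m_cos (hm i) (hunif i)
  have hES : ∀ i, ∫ ω, S i ω ∂Pm = 0 := fun i => m_sin (hm i) (hunif i)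
  -- second moments
  have hECC : ∀ i j, ∫ ω, C i ω * C j ω ∂Pm = if i = j then (1/2 : ℝ) else 4 / π ^ 2 := by
    intro i j
    by_cases hij : i = j
    · subst hij
      rw [if_pos rfl]
      have h := m_cos_sq (hm i) (hunif i)
      simpa [C, pow_two] using h
    · rw [if_neg hij]
      have hIF : IndepFun (C i) (C j) Pm :=
        (hindep.indepFun hij).comp Real.measurable_cos Real.measurable_cos
      have h2 : ∫ ω, C i ω * C j ω ∂Pm = (∫ ω, C i ω ∂Pm) * ∫ ω, C j ω ∂Pm :=
        hIF.integral_fun_mul_eq_mul_integral (hiC i).aestronglyMeasurable (hiC j).aestronglyMeasurable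
      rw [h2, hEC i, hEC j]
      ring
  have hESS : ∀ i j, ∫ ω, S i ω * S j ω ∂Pm = if i = j then (1/2 : ℝ) else 0 := by
    intro i j
    by_cases hij : i = j
    · subst hij
      rw [if_pos rfl]
      have h := m_sin_sq (hm i) (hunif i)
      simpa [S, pow_two] using h
    · rw [if_neg hij]
      have hIF : IndepFun (S i) (S j) Pm :=
        (hindep.indepFun hij).comp Real.measurable_sin Real.measurable_sin
      have h2 : ∫ ω, S i ω * S j ω ∂Pm = (∫ ω, S i ω ∂Pm) * ∫ ω, S j ω ∂Pm :=
        hIF.integral_fun_mul_eq_mul_integral (hiS i).aestronglyMeasurable (hiS j).aestronglyMeasurable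
      rw [h2, hES i, hES j]
      ring
  -- integrals of sums
  have hiX : Integrable Xf Pm := integrable_finset_sum _ (fun i _ => hiC i)
  have hiY : Integrable Yf Pm := integrable_finset_sum _ (fun i _ => hiS i)
  have hEX : ∫ ω, Xf ω ∂Pm = N * (2 / π) := by
    rw [hXf]
    rw [integral_finset_sum _ (fun i _ => hiC i)]
    simp [hEC, Finset.sum_const, Finset.card_univ, nsmul_eq_mul]
  have hEY : ∫ ω, Yf ω ∂Pm = 0 := by
    rw [hYf]
    rw [integral_finset_sum _ (fun i _ => hiS i)]
    simp [hES]
  -- squared sums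
  have hXsq : ∀ ω, Xf ω ^ 2 = ∑ i, ∑ j, C i ω * C j ω := fun ω => by
    rw [sq, Finset.sum_mul_sum]
  have hYsq : ∀ ω, Yf ω ^ 2 = ∑ i, ∑ j, S i ω * S j ω := fun ω => by
    rw [sq, Finset.sum_mul_sum]
  have hiX2 : Integrable (fun ω => Xf ω ^ 2) Pm := by
    have : (fun ω => Xf ω ^ 2) = fun ω => ∑ i, ∑ j, C i ω * C j ω := funext hXsq
    rw [this]
    exact integrable_finset_sum _ (fun i _ => integrable_finset_sum _ (fun j _ => hiCC i j))
  have hiY2 : Integrable (fun ω => Yf ω ^ 2) Pm := by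
    have : (fun ω => Yf ω ^ 2) = fun ω => ∑ i, ∑ j, S i ω * S j ω := funext hYsq
    rw [this]
    exact integrable_finset_sum _ (fun i _ => integrable_finset_sum _ (fun j _ => hiSS i j))
  have hdiagsum : ∀ (v : ℝ), ∀ i : Fin N,
      (∑ j, if i = j then (1/2 : ℝ) else v) = 1/2 + ((N : ℝ) - 1) * v := by
    intro v i
    rw [← Finset.add_sum_erase _ _ (Finset.mem_univ i), if_pos rfl]
    congr 1
    rw [Finset.sum_congr rfl (fun j hj => if_neg (fun h => (Finset.mem_erase.mp hj).1 h.symm)),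
      Finset.sum_const, Finset.card_erase_of_mem (Finset.mem_univ i), Finset.card_univ,
      Fintype.card_fin, nsmul_eq_mul, Nat.cast_sub i.pos]
    simp
  have hEX2 : ∫ ω, Xf ω ^ 2 ∂Pm = (N : ℝ) * (1/2) + ((N : ℝ) ^ 2 - N) * (4 / π ^ 2) := by
    have h1 : ∫ ω, Xf ω ^ 2 ∂Pm = ∑ i, ∑ j, ∫ ω, C i ω * C j ω ∂Pm := by
      simp only [hXsq]
      rw [integral_finset_sum _ (fun i _ => integrable_finset_sum _ (fun j _ => hiCC i j))]
      exact Finset.sum_congr rfl fun i _ => integral_finset_sum _ (fun j _ => hiCC i j)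
    rw [h1]
    have h2 : ∀ i : Fin N, (∑ j, ∫ ω, C i ω * C j ω ∂Pm) = 1/2 + ((N : ℝ) - 1) * (4 / π ^ 2) := by
      intro i
      rw [Finset.sum_congr rfl (fun j _ => hECC i j)]
      exact hdiagsum _ i
    rw [Finset.sum_congr rfl (fun i _ => h2 i), Finset.sum_const, Finset.card_univ,
      Fintype.card_fin, nsmul_eq_mul]
    ring
  have hEY2 : ∫ ω, Yf ω ^ 2 ∂Pm = (N : ℝ) * (1/2) := by
    have h1 : ∫ ω, Yf ω ^ 2 ∂Pm = ∑ i, ∑ j, ∫ ω, S i ω * S j ω ∂Pm := by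
      simp only [hYsq]
      rw [integral_finset_sum _ (fun i _ => integrable_finset_sum _ (fun j _ => hiSS i j))]
      exact Finset.sum_congr rfl fun i _ => integral_finset_sum _ (fun j _ => hiSS i j)
    rw [h1]
    have h2 : ∀ i : Fin N, (∑ j, ∫ ω, S i ω * S j ω ∂Pm) = 1/2 + ((N : ℝ) - 1) * 0 := by
      intro i
      rw [Finset.sum_congr rfl (fun j _ => hESS i j)]
      exact hdiagsum _ i
    rw [Finset.sum_congr rfl (fun i _ => h2 i), Finset.sum_const, Finset.card_univ,
      Fintype.card_fin, nsmul_eq_mul]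
    ring
  -- pointwise identity
  have he : ∀ s : ℝ, Complex.exp (Complex.I * (s : ℂ))
      = (Real.cos s : ℂ) + (Real.sin s : ℂ) * Complex.I := fun s => by
    rw [mul_comm, Complex.exp_mul_I, Complex.ofReal_cos, Complex.ofReal_sin]
  have hpt : ∀ ω, (‖
        ((α : ℂ) * (Real.sqrt (μIU * μSI) : ℂ) * ∑ i, Complex.exp (Complex.I * (θ i ω : ℂ)) +
          (Real.sqrt μSU : ℂ) * Complex.exp (Complex.I * (φSU : ℂ)))‖) ^ 2
      = (c * Xf ω + d * Real.cos φSU) ^ 2 + (c * Yf ω + d * Real.sin φSU) ^ 2 := by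
    intro ω
    have hz : (α : ℂ) * (Real.sqrt (μIU * μSI) : ℂ) * ∑ i, Complex.exp (Complex.I * (θ i ω : ℂ)) +
          (Real.sqrt μSU : ℂ) * Complex.exp (Complex.I * (φSU : ℂ))
        = ((c * Xf ω + d * Real.cos φSU : ℝ) : ℂ)
          + ((c * Yf ω + d * Real.sin φSU : ℝ) : ℂ) * Complex.I := by
      simp only [he, hc, hd, hXf, hYf, hC, hS]
      push_cast
      rw [Finset.sum_add_distrib, ← Finset.sum_mul]
      ring
    rw [hz, Complex.sq_norm, Complex.normSq_add_mul_I]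
  -- rewrite the integral
  have hI : ∫ ω, (‖
        ((α : ℂ) * (Real.sqrt (μIU * μSI) : ℂ) * ∑ i, Complex.exp (Complex.I * (θ i ω : ℂ)) +
          (Real.sqrt μSU : ℂ) * Complex.exp (Complex.I * (φSU : ℂ)))‖) ^ 2 ∂Pm
      = ∫ ω, ((c * Xf ω + d * Real.cos φSU) ^ 2 + (c * Yf ω + d * Real.sin φSU) ^ 2) ∂Pm :=
    integral_congr_ae (ae_of_all _ hpt)
  rw [hI]
  set a : ℝ := d * Real.cos φSU with ha
  set b : ℝ := d * Real.sin φSU with hb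
  have hexp : (fun ω => (c * Xf ω + a) ^ 2 + (c * Yf ω + b) ^ 2)
      = fun ω => c ^ 2 * Xf ω ^ 2 + (c ^ 2 * Yf ω ^ 2 +
          ((2 * c * a) * Xf ω + ((2 * c * b) * Yf ω + (a ^ 2 + b ^ 2)))) := by
    funext ω; ring
  rw [hexp]
  have e5 : ∫ ω, ((2 * c * b) * Yf ω + (a ^ 2 + b ^ 2)) ∂Pm
      = (∫ ω, (2 * c * b) * Yf ω ∂Pm) + ∫ ω, (a ^ 2 + b ^ 2) ∂Pm :=
    integral_add (hiY.const_mul _) (integrable_const _)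
  have e4 : ∫ ω, ((2 * c * a) * Xf ω + ((2 * c * b) * Yf ω + (a ^ 2 + b ^ 2))) ∂Pm
      = (∫ ω, (2 * c * a) * Xf ω ∂Pm)
        + ∫ ω, ((2 * c * b) * Yf ω + (a ^ 2 + b ^ 2)) ∂Pm :=
    integral_add (hiX.const_mul _) ((hiY.const_mul _).add (integrable_const _))
  have e3 : ∫ ω, (c ^ 2 * Yf ω ^ 2 +
        ((2 * c * a) * Xf ω + ((2 * c * b) * Yf ω + (a ^ 2 + b ^ 2)))) ∂Pm
      = (∫ ω, c ^ 2 * Yf ω ^ 2 ∂Pm)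
        + ∫ ω, ((2 * c * a) * Xf ω + ((2 * c * b) * Yf ω + (a ^ 2 + b ^ 2))) ∂Pm :=
    integral_add (hiY2.const_mul _) ((hiX.const_mul _).add
      ((hiY.const_mul _).add (integrable_const _)))
  have e2 : ∫ ω, (c ^ 2 * Xf ω ^ 2 + (c ^ 2 * Yf ω ^ 2 +
        ((2 * c * a) * Xf ω + ((2 * c * b) * Yf ω + (a ^ 2 + b ^ 2))))) ∂Pm
      = (∫ ω, c ^ 2 * Xf ω ^ 2 ∂Pm)
        + ∫ ω, (c ^ 2 * Yf ω ^ 2 +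
            ((2 * c * a) * Xf ω + ((2 * c * b) * Yf ω + (a ^ 2 + b ^ 2)))) ∂Pm :=
    integral_add (hiX2.const_mul _) ((hiY2.const_mul _).add ((hiX.const_mul _).add
      ((hiY.const_mul _).add (integrable_const _))))
  have f1 : ∫ ω, c ^ 2 * Xf ω ^ 2 ∂Pm = c ^ 2 * ∫ ω, Xf ω ^ 2 ∂Pm :=
    integral_const_mul _ _
  have f2 : ∫ ω, c ^ 2 * Yf ω ^ 2 ∂Pm = c ^ 2 * ∫ ω, Yf ω ^ 2 ∂Pm :=
    integral_const_mul _ _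
  have f3 : ∫ ω, (2 * c * a) * Xf ω ∂Pm = (2 * c * a) * ∫ ω, Xf ω ∂Pm :=
    integral_const_mul _ _
  have f4 : ∫ ω, (2 * c * b) * Yf ω ∂Pm = (2 * c * b) * ∫ ω, Yf ω ∂Pm :=
    integral_const_mul _ _
  have f5 : ∫ ω, (a ^ 2 + b ^ 2) ∂Pm = a ^ 2 + b ^ 2 := by
    rw [integral_const]
    simp
  rw [e2, e3, e4, e5, f1, f2, f3, f4, f5, hEX2, hEY2, hEX, hEY]
  -- final algebra
  have hc2 : c ^ 2 = α ^ 2 * (μIU * μSI) := by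
    rw [hc, mul_pow, Real.sq_sqrt (mul_nonneg hIU.le hSI.le)]
  have hcd : c * d = α * Real.sqrt (μIU * μSI * μSU) := by
    rw [hc, hd, mul_assoc, ← Real.sqrt_mul (mul_nonneg hIU.le hSI.le)]
  have hd2 : d ^ 2 = μSU := Real.sq_sqrt hSU.le
  have hab : a ^ 2 + b ^ 2 = μSU := by
    have h1 : a ^ 2 + b ^ 2 = d ^ 2 * (Real.cos φSU ^ 2 + Real.sin φSU ^ 2) := by
      rw [ha, hb]; ring
    rw [h1, Real.cos_sq_add_sin_sq, mul_one, hd2]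
  rw [ha, hb] at hab ⊢
  linear_combination ((N : ℝ) + 4 * ((N : ℝ) ^ 2 - (N : ℝ)) / π ^ 2) * hc2 +
    (4 * (N : ℝ) / π * Real.cos φSU) * hcd + hab
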